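/- With ℷ_α as defined (ℷ₀ = ℵ₀, ℷ_{α+1} = min{ℷ : 2^ℷ > 2^{ℷ_α}}, suprema at limits), for every ordinal α one has 2^{ℷ_{α+1}} ≤⁺ ded(2^{ℷ_α}), meaning: either 2^{ℷ_{α+1}} < ded(2^{ℷ_α}), or 2^{ℷ_{α+1}} = ded(2^{ℷ_α}) and the supremum defining ded is attained. In particular 2^{ℷ_{α+1}} ≤ ded(2^{ℷ_α}). -/

import Mathlib

open Cardinal

universe u

/-- `D` is a dense subset of the linear order `α`: between any two elements of `α`
there is an element of `D`. -/
def IsDenseSub {α : Type u} [LinearOrder α] (D : Set α) : Prop :=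
  ∀ a b : α, a < b → ∃ d ∈ D, a ≤ d ∧ d ≤ b

/-- `ded κ`: the supremum of the cardinalities of linear orders having a dense subset
of size at most `κ`. -/
noncomputable def ded (κ : Cardinal.{u}) : Cardinal.{u} :=
  sSup {c : Cardinal.{u} | ∃ (α : Type u) (_ : LinearOrder α) (D : Set α),
    IsDenseSub D ∧ #D ≤ κ ∧ c = #α}


/-- The gimel sequence: `ℷ₀ = ℵ₀`, `ℷ_{α+1} = min {ℷ : 2^ℷ > 2^{ℷ_α}}`, and
`ℷ_α = Σ_{β<α} ℷ_β` for limit `α`. -/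
noncomputable def gimel (α : Ordinal.{u}) : Cardinal.{u} :=
  Ordinal.limitRecOn α
    ℵ₀
    (fun _ g => sInf {c : Cardinal.{u} | (2 : Cardinal.{u}) ^ g < 2 ^ c})
    (fun o _ IH => Cardinal.sum fun i : o.ToType =>
      IH (@Ordinal.typein o.ToType (· < ·) isWellOrder_lt i)
        (Ordinal.typein_lt_self i))

lemma gimel_zero : gimel (0 : Ordinal.{u}) = ℵ₀ :=
  Ordinal.limitRecOn_zero _ _ _

lemma gimel_succ (α : Ordinal.{u}) :
    gimel (α + 1) = sInf {c : Cardinal.{u} | (2 : Cardinal.{u}) ^ gimel α < 2 ^ c} := by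
  rw [gimel, show α + 1 = Order.succ α from rfl, Ordinal.limitRecOn_succ]
  rfl

lemma gimel_limit {o : Ordinal.{u}} (h : Order.IsSuccLimit o) :
    gimel o = Cardinal.sum fun i : o.ToType =>
      gimel (@Ordinal.typein o.ToType (· < ·) isWellOrder_lt i) := by
  rw [gimel, Ordinal.limitRecOn_limit _ _ _ _ h]
  rfl

lemma gimel_succ_set_nonempty (α : Ordinal.{u}) :
    {c : Cardinal.{u} | (2 : Cardinal.{u}) ^ gimel α < 2 ^ c}.Nonempty :=
  ⟨2 ^ gimel α, Cardinal.cantor _⟩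

lemma two_pow_lt_two_pow_gimel_succ (α : Ordinal.{u}) :
    (2 : Cardinal.{u}) ^ gimel α < 2 ^ gimel (α + 1) := by
  rw [gimel_succ]
  exact csInf_mem (gimel_succ_set_nonempty α)

lemma gimel_succ_le (α : Ordinal.{u}) : gimel (α + 1) ≤ 2 ^ gimel α := by
  rw [gimel_succ]
  exact csInf_le' (Cardinal.cantor _)

lemma two_pow_le_of_lt_gimel_succ {α : Ordinal.{u}} {c : Cardinal.{u}}
    (h : c < gimel (α + 1)) : (2 : Cardinal.{u}) ^ c ≤ 2 ^ gimel α := by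
  rw [gimel_succ] at h
  by_contra hc
  exact h.not_ge (csInf_le' (not_le.1 hc))

lemma aleph0_le_gimel (α : Ordinal.{u}) : ℵ₀ ≤ gimel α := by
  induction α using Ordinal.limitRecOn with
  | zero => rw [gimel_zero]
  | add_one β ih =>
      by_contra h
      push_neg at h
      have h2 : (2 : Cardinal.{u}) ^ gimel (β + 1) < ℵ₀ :=
        Cardinal.power_lt_aleph0 (Cardinal.lt_aleph0.2 ⟨2, by norm_num⟩) h
      have h3 : ℵ₀ ≤ (2 : Cardinal.{u}) ^ gimel β :=
        ih.trans (Cardinal.cantor _).le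
      exact absurd (two_pow_lt_two_pow_gimel_succ β) (by
        exact not_lt.2 ((h2.le.trans h3)))
  | limit o ho ih =>
      have : Nonempty o.ToType := Ordinal.toType_nonempty_iff_ne_zero.2 ho.ne_bot
      obtain ⟨i⟩ := this
      rw [gimel_limit ho]
      exact (ih _ (Ordinal.typein_lt_self i)).trans (Cardinal.le_sum _ i)

lemma prop_lt_iff {p q : Prop} : p < q ↔ ¬p ∧ q := by
  rw [lt_iff_le_and_ne]
  constructor
  · rintro ⟨h1, h2⟩
    have h1' : p → q := h1
    by_cases hp : p
    · exact absurd (propext ⟨fun _ => h1' hp, fun _ => hp⟩) h2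
    · by_cases hq : q
      · exact ⟨hp, hq⟩
      · exact absurd (propext ⟨h1', fun h => absurd h hq⟩) h2
  · rintro ⟨hp, hq⟩
    exact ⟨fun h => (hp h).elim, fun h => hp (h ▸ hq)⟩

lemma ded_set_bddAbove (κ : Cardinal.{u}) :
    BddAbove {c : Cardinal.{u} | ∃ (α : Type u) (_ : LinearOrder α) (D : Set α),
      IsDenseSub D ∧ #D ≤ κ ∧ c = #α} := by
  refine ⟨2 ^ κ * 2 ^ κ, ?_⟩
  rintro c ⟨γ, _, D, hD, hDκ, rfl⟩
  have hinj : Function.Injective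
      (fun x : γ => (({d : D | (d : γ) < x}, {d : D | (d : γ) ≤ x}) : Set D × Set D)) := by
    intro x y hxy
    by_contra hne
    wlog hlt : x < y generalizing x y
    · exact this hxy.symm (Ne.symm hne) ((Ne.lt_or_gt hne).resolve_left hlt)
    obtain ⟨d, hdD, hxd, hdy⟩ := hD x y hlt
    have h1 : {e : D | (e : γ) < x} = {e : D | (e : γ) < y} := congrArg Prod.fst hxy
    have h2 : {e : D | (e : γ) ≤ x} = {e : D | (e : γ) ≤ y} := congrArg Prod.snd hxy
    rcases eq_or_lt_of_le hxd with heq | hxd'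
    · have hmem : (⟨d, hdD⟩ : D) ∈ {e : D | (e : γ) < y} := by
        simp only [Set.mem_setOf_eq]; exact heq ▸ hlt
      rw [← h1] at hmem
      simp only [Set.mem_setOf_eq] at hmem
      exact absurd hmem (by rw [← heq]; exact lt_irrefl x)
    · have hmem : (⟨d, hdD⟩ : D) ∈ {e : D | (e : γ) ≤ y} := hdy
      rw [← h2] at hmem
      exact absurd hmem (not_le.2 hxd')
  calc #γ ≤ #(Set D × Set D) := Cardinal.mk_le_of_injective hinj
    _ = 2 ^ #D * 2 ^ #D := by
        rw [Cardinal.mk_prod, Cardinal.mk_set]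
        simp
    _ ≤ 2 ^ κ * 2 ^ κ :=
        mul_le_mul' (Cardinal.power_le_power_left two_ne_zero hDκ)
          (Cardinal.power_le_power_left two_ne_zero hDκ)

theorem stmt7 (α : Ordinal.{u}) :
    ((2 : Cardinal.{u}) ^ gimel (α + 1) < ded (2 ^ gimel α) ∨
      ((2 : Cardinal.{u}) ^ gimel (α + 1) = ded (2 ^ gimel α) ∧
        ∃ (β : Type u) (_ : LinearOrder β) (D : Set β),
          IsDenseSub D ∧ #D ≤ 2 ^ gimel α ∧ #β = ded (2 ^ gimel α))) ∧
    (2 : Cardinal.{u}) ^ gimel (α + 1) ≤ ded (2 ^ gimel α) := by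
  have hμinf : ℵ₀ ≤ (2 : Cardinal.{u}) ^ gimel α :=
    (aleph0_le_gimel α).trans (Cardinal.cantor _).le
  have hκinf : ℵ₀ ≤ gimel (α + 1) := aleph0_le_gimel _
  have hκμ : gimel (α + 1) ≤ 2 ^ gimel α := gimel_succ_le α
  set μ : Cardinal.{u} := 2 ^ gimel α with hμdef
  set κ : Cardinal.{u} := gimel (α + 1) with hκdef
  let ι : Type u := κ.ord.ToType
  have hmkι : #ι = κ := Cardinal.mk_ord_toType κ
  let β : Type u := Lex (ι → Prop)
  have hmkβ : #β = 2 ^ κ := by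
    rw [show #β = #(Set ι) from rfl, Cardinal.mk_set, hmkι]
  let D : Set β := {h | ∃ i : ι, ∀ j : ι, i < j → ofLex h j}
  have hlt_iff : ∀ a b : β, a < b ↔
      ∃ i : ι, (∀ j : ι, j < i → ofLex a j = ofLex b j) ∧ ofLex a i < ofLex b i :=
    fun a b => Iff.rfl
  have hdense : IsDenseSub D := by
    intro a b hab
    obtain ⟨i, hagree, hi⟩ := (hlt_iff a b).1 hab
    obtain ⟨hna, hb⟩ := prop_lt_iff.1 hi
    refine ⟨toLex (fun j => if j < i then ofLex a j else if j = i then False else True),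
      ⟨i, fun j hj => ?_⟩, ?_, ?_⟩
    · simp only [ofLex_toLex, if_neg (not_lt.2 hj.le), if_neg hj.ne']
    · refine le_of_not_gt fun hda => ?_
      obtain ⟨j₀, hag, hj₀⟩ := (hlt_iff _ _).1 hda
      obtain ⟨hnd, ha⟩ := prop_lt_iff.1 hj₀
      simp only [ofLex_toLex] at hnd
      rcases lt_trichotomy j₀ i with h | h | h
      · rw [if_pos h] at hnd; exact hnd ha
      · subst h; exact hna ha
      · rw [if_neg (not_lt.2 h.le), if_neg h.ne'] at hnd
        exact hnd trivial
    · refine le_of_lt ((hlt_iff _ _).2 ⟨i, fun j hj => ?_, ?_⟩)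
      · simp only [ofLex_toLex, if_pos hj]
        exact hagree j hj
      · simp only [ofLex_toLex, if_neg (lt_irrefl i), if_pos rfl]
        exact prop_lt_iff.2 ⟨not_false, hb⟩
  have hci : ∀ i : ι, #{j : ι // j ≤ i} < κ := by
    intro i
    have h1 : #{j : ι // j < i} < κ := by
      have h3 : (@Ordinal.typein ι (· < ·) isWellOrder_lt i).card < κ :=
        Cardinal.lt_ord.1 (Ordinal.typein_lt_self i)
      exact h3
    have hset : {j : ι | j ≤ i} = {j : ι | j < i} ∪ {i} := by
      ext j; simp [le_iff_lt_or_eq, or_comm]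
    calc #{j : ι // j ≤ i} = #({j : ι | j < i} ∪ {i} : Set ι) := by rw [← hset]; rfl
      _ ≤ #({j : ι | j < i} : Set ι) + #({i} : Set ι) := Cardinal.mk_union_le _ _
      _ = #{j : ι // j < i} + 1 := by rw [Cardinal.mk_singleton]; rfl
      _ < κ := Cardinal.add_lt_of_lt hκinf h1 (Cardinal.one_lt_aleph0.trans_le hκinf)
  have hDle : #D ≤ μ := by
    have hinj : Function.Injective (fun h : D =>
        (⟨Classical.choose h.2, fun j => ofLex h.1 j.1⟩ :
          Σ i : ι, ({j : ι // j ≤ i} → Prop))) := by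
      intro h1 h2 heq
      obtain ⟨hieq, hfe⟩ := Sigma.mk.inj_iff.1 heq
      have hspec1 := Classical.choose_spec h1.2
      have hspec2 := Classical.choose_spec h2.2
      set i := Classical.choose h1.2 with hi
      rw [← hieq] at hspec2 hfe
      have hfe' := funext_iff.1 (eq_of_heq hfe)
      refine Subtype.ext (ofLex.injective (funext fun j => ?_))
      rcases le_or_gt j i with hj | hj
      · exact hfe' ⟨j, hj⟩
      · exact propext ⟨fun _ => hspec2 j hj, fun _ => hspec1 j hj⟩
    calc #D ≤ #(Σ i : ι, ({j : ι // j ≤ i} → Prop)) := Cardinal.mk_le_of_injective hinj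
      _ = Cardinal.sum fun i : ι => #({j : ι // j ≤ i} → Prop) := Cardinal.mk_sigma _
      _ ≤ Cardinal.sum fun _ : ι => μ := Cardinal.sum_le_sum _ _ fun i => by
            rw [show #({j : ι // j ≤ i} → Prop) = 2 ^ #{j : ι // j ≤ i} from Cardinal.mk_set]
            exact two_pow_le_of_lt_gimel_succ (hci i)
      _ = #ι * μ := Cardinal.sum_const' _ _
      _ = κ * μ := by rw [hmkι]
      _ ≤ μ * μ := mul_le_mul_left hκμ μ
      _ = μ := Cardinal.mul_eq_self hμinf
  have hmem : (2 : Cardinal.{u}) ^ κ ∈ {c : Cardinal.{u} |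
      ∃ (γ : Type u) (_ : LinearOrder γ) (E : Set γ), IsDenseSub E ∧ #E ≤ μ ∧ c = #γ} :=
    ⟨β, inferInstance, D, hdense, hDle, hmkβ.symm⟩
  have hle : (2 : Cardinal.{u}) ^ κ ≤ ded μ := le_csSup (ded_set_bddAbove μ) hmem
  refine ⟨?_, hle⟩
  rcases hle.lt_or_eq with h | h
  · exact Or.inl h
  · exact Or.inr ⟨h, β, inferInstance, D, hdense, hDle, by rw [hmkβ, h]⟩
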